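/- Let G be a bipartite graph with parts X (|X| = m, all degrees l) and Y (|Y| = n, all degrees k), m ≥ n, ml = nk. Then for every integer t with k ≤ t ≤ nk, there exists a proper edge t-coloring of G interval on Y. -/

import Mathlib

/-- A proper edge `t`-coloring of the bipartite graph with parts `α`, `β` and
edge set `E ⊆ α × β`: colors lie in `{1,…,t}`, all colors are used, and
adjacent edges (sharing an endpoint) get distinct colors. -/
def IsProperEdgeColoring {α β : Type*} (E : Finset (α × β)) (t : ℕ)
    (φ : α × β → ℕ) : Prop :=
  (∀ e ∈ E, φ e ∈ Finset.Icc 1 t) ∧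
  (∀ c ∈ Finset.Icc 1 t, ∃ e ∈ E, φ e = c) ∧
  (∀ e ∈ E, ∀ e' ∈ E, e ≠ e' → (e.1 = e'.1 ∨ e.2 = e'.2) → φ e ≠ φ e')

/-- The spectrum of a vertex `x` of the part `α`: the set of colors on edges
incident with `x`. -/
def spectX {α β : Type*} [DecidableEq α] (E : Finset (α × β))
    (φ : α × β → ℕ) (x : α) : Finset ℕ :=
  (E.filter fun e => e.1 = x).image φ

/-- The spectrum of a vertex `y` of the part `β`. -/
def spectY {α β : Type*} [DecidableEq β] (E : Finset (α × β))
    (φ : α × β → ℕ) (y : β) : Finset ℕ :=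
  (E.filter fun e => e.2 = y).image φ

/-- Degree of a vertex of the part `α`. -/
def degX {α β : Type*} [DecidableEq α] (E : Finset (α × β)) (x : α) : ℕ :=
  (E.filter fun e => e.1 = x).card

/-- Degree of a vertex of the part `β`. -/
def degY {α β : Type*} [DecidableEq β] (E : Finset (α × β)) (y : β) : ℕ :=
  (E.filter fun e => e.2 = y).card

/-- A finite set of naturals is an interval: nonempty and consisting of
consecutive integers. -/
def IsIntervalFinset (S : Finset ℕ) : Prop :=
  S.Nonempty ∧ ∀ a ∈ S, ∀ b ∈ S, ∀ c, a ≤ c → c ≤ b → c ∈ S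

/-- The coloring is interval in every vertex of the part `α` (every vertex
with at least one incident edge has an interval spectrum). -/
def IntervalOnX {α β : Type*} [DecidableEq α] (E : Finset (α × β))
    (φ : α × β → ℕ) : Prop :=
  ∀ x : α, (spectX E φ x).Nonempty → IsIntervalFinset (spectX E φ x)

/-- The coloring is interval in every vertex of the part `β`. -/
def IntervalOnY {α β : Type*} [DecidableEq β] (E : Finset (α × β))
    (φ : α × β → ℕ) : Prop :=
  ∀ y : β, (spectY E φ y).Nonempty → IsIntervalFinset (spectY E φ y)

/-- Maximum degree of the bipartite graph. -/
def maxDeg {α β : Type*} [Fintype α] [Fintype β] [DecidableEq α] [DecidableEq β]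
    (E : Finset (α × β)) : ℕ :=
  max (Finset.univ.sup (degX E)) (Finset.univ.sup (degY E))


section Stmt15Aux

set_option linter.unusedSectionVars false
set_option maxHeartbeats 1000000

open Finset

variable {α β : Type*} [DecidableEq α] [DecidableEq β]

lemma card_filter_snd (F : Finset (α × β)) (S : Finset β) :
    (F.filter (fun e => e.2 ∈ S)).card = ∑ y ∈ S, degY F y := by
  rw [Finset.card_eq_sum_card_fiberwise (f := Prod.snd) (s := F.filter (fun e => e.2 ∈ S)) (t := S)
    (fun e he => (mem_filter.1 he).2)]
  refine Finset.sum_congr rfl fun y hy => ?_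
  unfold degY
  congr 1
  ext e
  simp only [mem_filter, and_assoc]
  constructor
  · rintro ⟨h1, h2, h3⟩; exact ⟨h1, h3⟩
  · rintro ⟨h1, h3⟩; exact ⟨h1, h3 ▸ hy, h3⟩

lemma card_filter_fst (F : Finset (α × β)) (S : Finset α) :
    (F.filter (fun e => e.1 ∈ S)).card = ∑ x ∈ S, degX F x := by
  rw [Finset.card_eq_sum_card_fiberwise (f := Prod.fst) (s := F.filter (fun e => e.1 ∈ S)) (t := S)
    (fun e he => (mem_filter.1 he).2)]
  refine Finset.sum_congr rfl fun x hx => ?_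
  unfold degX
  congr 1
  ext e
  simp only [mem_filter, and_assoc]
  constructor
  · rintro ⟨h1, h2, h3⟩; exact ⟨h1, h3⟩
  · rintro ⟨h1, h3⟩; exact ⟨h1, h3 ▸ hx, h3⟩

lemma card_le_mul_image_fst (F : Finset (α × β)) (j : ℕ) (hx : ∀ x, degX F x ≤ j)
    (G : Finset (α × β)) (hG : G ⊆ F) :
    G.card ≤ j * (G.image Prod.fst).card := by
  rw [Finset.card_eq_sum_card_fiberwise (f := Prod.fst) (t := G.image Prod.fst)
    (fun e he => Finset.mem_image_of_mem _ he)]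
  calc ∑ x ∈ G.image Prod.fst, (G.filter (fun e => e.1 = x)).card
      ≤ ∑ x ∈ G.image Prod.fst, j := by
        refine Finset.sum_le_sum fun x _ => ?_
        exact le_trans (Finset.card_le_card (Finset.filter_subset_filter _ hG)) (hx x)
    _ = j * (G.image Prod.fst).card := by rw [Finset.sum_const, smul_eq_mul, mul_comm]

set_option linter.unusedSectionVars false

lemma exists_good_matching [Fintype α] [Fintype β] (F : Finset (α × β)) (j : ℕ) (hj : 0 < j)
    (hyd : ∀ y, degY F y = j) (hxd : ∀ x, degX F x ≤ j)
    (hmn : Fintype.card β ≤ Fintype.card α) :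
    ∃ g : β → α, Function.Injective g ∧ (∀ y, (g y, y) ∈ F) ∧
      (∀ x, degX F x = j → ∃ y, g y = x) := by
  classical
  set m := Fintype.card α with hm
  set n := Fintype.card β with hn
  set A : β ⊕ Fin (m - n) → Finset α :=
    Sum.elim (fun y => (F.filter (fun e => e.2 = y)).image Prod.fst)
      (fun _ => Finset.univ.filter (fun x => degX F x ≠ j)) with hA
  have hall : ∀ s : Finset (β ⊕ Fin (m - n)), s.card ≤ (s.biUnion A).card := by
    intro s
    set S1 := s.toLeft with hS1
    set S2 := s.toRight with hS2
    have hsplit : S1.card + S2.card = s.card := Finset.card_toLeft_add_card_toRight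
    set N := (F.filter (fun e => e.2 ∈ S1)).image Prod.fst with hN
    have hNsub : N ⊆ s.biUnion A := by
      intro x hx
      obtain ⟨e, he, hex⟩ := Finset.mem_image.1 hx
      obtain ⟨heF, heS⟩ := Finset.mem_filter.1 he
      refine Finset.mem_biUnion.2 ⟨Sum.inl e.2, Finset.mem_toLeft.1 heS, ?_⟩
      simp only [hA, Sum.elim_inl]
      exact Finset.mem_image.2 ⟨e, Finset.mem_filter.2 ⟨heF, rfl⟩, hex⟩
    have hS1N : S1.card ≤ N.card := by
      have h1 : (F.filter (fun e => e.2 ∈ S1)).card = j * S1.card := by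
        rw [card_filter_snd]
        simp [hyd, mul_comm]
      have h2 := card_le_mul_image_fst F j hxd (F.filter (fun e => e.2 ∈ S1))
        (Finset.filter_subset _ _)
      rw [h1] at h2
      exact Nat.le_of_mul_le_mul_left h2 hj
    rcases Finset.eq_empty_or_nonempty S2 with hS2e | hS2ne
    · rw [← hsplit, hS2e, Finset.card_empty, add_zero]
      exact le_trans hS1N (Finset.card_le_card hNsub)
    · -- the filler set is available
      set Xc := Finset.univ.filter (fun x => degX F x ≠ j) with hXc
      have hXcsub : Xc ⊆ s.biUnion A := by
        obtain ⟨z, hz⟩ := hS2ne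
        intro x hx
        exact Finset.mem_biUnion.2 ⟨Sum.inr z, Finset.mem_toRight.1 hz, hx⟩
      set B := Finset.univ.filter (fun x => degX F x = j ∧ x ∉ N) with hB
      have hcover : (Finset.univ : Finset α) ⊆ (Xc ∪ N) ∪ B := by
        intro x _
        by_cases h1 : degX F x = j
        · by_cases h2 : x ∈ N
          · exact Finset.mem_union_left _ (Finset.mem_union_right _ h2)
          · exact Finset.mem_union_right _ (Finset.mem_filter.2 ⟨Finset.mem_univ x, h1, h2⟩)
        · exact Finset.mem_union_left _ (Finset.mem_union_left _
            (Finset.mem_filter.2 ⟨Finset.mem_univ x, h1⟩))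
      have hm_le : m ≤ (Xc ∪ N).card + B.card := by
        calc m = (Finset.univ : Finset α).card := (Finset.card_univ).symm
        _ ≤ ((Xc ∪ N) ∪ B).card := Finset.card_le_card hcover
        _ ≤ (Xc ∪ N).card + B.card := Finset.card_union_le _ _
      -- counting: j * B.card ≤ j * (n - S1.card)
      have hBF : (F.filter (fun e => e.1 ∈ B)).card = j * B.card := by
        rw [card_filter_fst]
        rw [Finset.sum_congr rfl (fun x hx => (Finset.mem_filter.1 hx).2.1)]
        simp [mul_comm]
      have hBsub2 : F.filter (fun e => e.1 ∈ B) ⊆ F.filter (fun e => e.2 ∈ Finset.univ \ S1) := by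
        intro e he
        obtain ⟨heF, heB⟩ := Finset.mem_filter.1 he
        refine Finset.mem_filter.2 ⟨heF, Finset.mem_sdiff.2 ⟨Finset.mem_univ _, fun hc => ?_⟩⟩
        have : e.1 ∈ N := Finset.mem_image.2 ⟨e, Finset.mem_filter.2 ⟨heF, hc⟩, rfl⟩
        exact (Finset.mem_filter.1 heB).2.2 this
      have hcompl : (F.filter (fun e => e.2 ∈ Finset.univ \ S1)).card = j * (n - S1.card) := by
        rw [card_filter_snd]
        rw [Finset.sum_congr rfl (fun y _ => hyd y), Finset.sum_const, smul_eq_mul]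
        rw [Finset.card_sdiff_of_subset (Finset.subset_univ _), Finset.card_univ, mul_comm]
      have hBn : B.card ≤ n - S1.card := by
        have := Finset.card_le_card hBsub2
        rw [hBF, hcompl] at this
        exact Nat.le_of_mul_le_mul_left (by linarith [this]) hj
      have hS1n : S1.card ≤ n := by
        rw [hn, ← Finset.card_univ]; exact Finset.card_le_card (Finset.subset_univ _)
      have hS2mn : S2.card ≤ m - n := by
        have := Finset.card_le_univ S2
        simpa using this
      have hfin : Xc ∪ N ⊆ s.biUnion A := Finset.union_subset hXcsub hNsub
      have := Finset.card_le_card hfin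
      omega
  obtain ⟨f, hfinj, hfmem⟩ := (Finset.all_card_le_biUnion_card_iff_exists_injective A).1 hall
  refine ⟨fun y => f (Sum.inl y), fun y y' h => ?_, fun y => ?_, fun x hx => ?_⟩
  · have := hfinj h; exact Sum.inl.inj this
  · have := hfmem (Sum.inl y)
    simp only [hA, Sum.elim_inl] at this
    obtain ⟨e, he, hex⟩ := Finset.mem_image.1 this
    obtain ⟨heF, hey⟩ := Finset.mem_filter.1 he
    have : (f (Sum.inl y), y) = e := Prod.ext hex.symm hey.symm
    rw [this]; exact heF
  · -- surjectivity
    have hcard : Fintype.card (β ⊕ Fin (m - n)) = Fintype.card α := by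
      simp [Fintype.card_sum, Fintype.card_fin]
      omega
    have hbij : Function.Bijective f :=
      (Fintype.bijective_iff_injective_and_card f).2 ⟨hfinj, hcard⟩
    obtain ⟨i, hi⟩ := hbij.2 x
    cases i with
    | inl y => exact ⟨y, hi⟩
    | inr z =>
      exfalso
      have := hfmem (Sum.inr z)
      simp only [hA, Sum.elim_inr, Finset.mem_filter] at this
      rw [hi] at this
      exact this.2 hx

lemma konig_coloring [Fintype α] [Fintype β] :
    ∀ (j : ℕ) (F : Finset (α × β)), (∀ y, degY F y = j) → (∀ x, degX F x ≤ j) →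
    Fintype.card β ≤ Fintype.card α →
    ∃ c : α × β → ℕ, (∀ e ∈ F, c e ∈ Finset.Icc 1 j) ∧
      (∀ e ∈ F, ∀ f ∈ F, e ≠ f → (e.1 = f.1 ∨ e.2 = f.2) → c e ≠ c f) := by
  intro j
  induction j with
  | zero =>
    intro F hyd _ _
    have hF : F = ∅ := by
      by_contra h
      obtain ⟨e, he⟩ := Finset.nonempty_iff_ne_empty.2 h
      have : e ∈ F.filter (fun f => f.2 = e.2) := Finset.mem_filter.2 ⟨he, rfl⟩
      have h0 := hyd e.2
      unfold degY at h0
      rw [Finset.card_eq_zero.1 h0] at this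
      exact absurd this (Finset.notMem_empty e)
    subst hF
    exact ⟨fun _ => 0, fun e he => absurd he (Finset.notMem_empty e),
      fun e he => absurd he (Finset.notMem_empty e)⟩
  | succ j ih =>
    intro F hyd hxd hmn
    obtain ⟨g, hginj, hgmem, hgcov⟩ := exists_good_matching F (j + 1) (Nat.succ_pos j)
      hyd hxd hmn
    set F' := F.filter (fun e => e.1 ≠ g e.2) with hF'
    have hyd' : ∀ y, degY F' y = j := by
      intro y
      have : F'.filter (fun e => e.2 = y) = (F.filter (fun e => e.2 = y)).erase (g y, y) := by
        ext e
        simp only [hF', Finset.mem_filter, Finset.mem_erase, and_assoc]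
        constructor
        · rintro ⟨heF, hne, hey⟩
          exact ⟨fun hc => hne (by rw [hc]), heF, hey⟩
        · rintro ⟨hne, heF, hey⟩
          refine ⟨heF, fun hc => hne ?_, hey⟩
          have he2 : e = (e.1, e.2) := rfl
          rw [he2, hc, hey]
      unfold degY
      have hmem : (g y, y) ∈ F.filter (fun e => e.2 = y) :=
        Finset.mem_filter.2 ⟨hgmem y, rfl⟩
      rw [this, Finset.card_erase_of_mem hmem]
      have := hyd y
      unfold degY at this
      omega
    have hxd' : ∀ x, degX F' x ≤ j := by
      intro x
      by_cases hcov : ∃ y, g y = x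
      · obtain ⟨y, hy⟩ := hcov
        have hsub : F'.filter (fun e => e.1 = x) ⊆ (F.filter (fun e => e.1 = x)).erase (x, y) := by
          intro e he
          have h1 := Finset.mem_filter.1 he
          have h2 := Finset.mem_filter.1 h1.1
          refine Finset.mem_erase.2 ⟨fun hc => ?_, Finset.mem_filter.2 ⟨h2.1, h1.2⟩⟩
          apply h2.2
          rw [hc]
          exact hy.symm
        have h1 := Finset.card_le_card hsub
        have h2 : (x, y) ∈ F.filter (fun e => e.1 = x) := by
          refine Finset.mem_filter.2 ⟨?_, rfl⟩
          rw [← hy]; exact hgmem y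
        rw [Finset.card_erase_of_mem h2] at h1
        have := hxd x
        unfold degX at *
        omega
      · have hne : degX F x ≠ j + 1 := fun hc => hcov (hgcov x hc)
        have hle : degX F' x ≤ degX F x :=
          Finset.card_le_card (Finset.filter_subset_filter _ (Finset.filter_subset _ _))
        have := hxd x
        omega
    obtain ⟨c', hc'mem, hc'prop⟩ := ih F' hyd' hxd' hmn
    refine ⟨fun e => if e.1 = g e.2 then j + 1 else c' e, fun e he => ?_, ?_⟩
    · by_cases h : e.1 = g e.2
      · simp [h]
      · simp only [h, if_false]
        have : e ∈ F' := Finset.mem_filter.2 ⟨he, h⟩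
        have := hc'mem e this
        simp only [Finset.mem_Icc] at *
        omega
    · intro e he f hf hne hadj
      by_cases h1 : e.1 = g e.2 <;> by_cases h2 : f.1 = g f.2
      · exfalso
        rcases hadj with h | h
        · rw [h1, h2] at h
          have := hginj h
          exact hne (Prod.ext (by rw [h1, h2, this]) this)
        · exact hne (Prod.ext (by rw [h1, h2, h]) h)
      · have hfF' : f ∈ F' := Finset.mem_filter.2 ⟨hf, h2⟩
        have := hc'mem f hfF'
        simp only [Finset.mem_Icc] at this
        simp only [h1, h2, if_true, if_false]
        omega
      · have heF' : e ∈ F' := Finset.mem_filter.2 ⟨he, h1⟩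
        have := hc'mem e heF'
        simp only [Finset.mem_Icc] at this
        simp only [h1, h2, if_false, if_true]
        omega
      · simp only [h1, h2, if_false]
        exact hc'prop e (Finset.mem_filter.2 ⟨he, h1⟩) f (Finset.mem_filter.2 ⟨hf, h2⟩) hne hadj

lemma exists_kernel (H : Finset (α × β)) (c₀ : α × β → ℕ)
    (hc : ∀ e ∈ H, ∀ f ∈ H, e ≠ f → (e.1 = f.1 ∨ e.2 = f.2) → c₀ e ≠ c₀ f) :
    ∃ K, K ⊆ H ∧ (∀ e ∈ K, ∀ f ∈ K, e ≠ f → ¬(e.1 = f.1 ∨ e.2 = f.2)) ∧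
      ∀ e ∈ H, e ∉ K → ∃ f ∈ K,
        (f.1 = e.1 ∧ c₀ f < c₀ e) ∨ (f.2 = e.2 ∧ c₀ e < c₀ f) := by
  classical
  set P : Finset (α × β) → Finset (α × β) :=
    fun R => (H \ R).filter (fun e => ∀ f ∈ H \ R, f.1 = e.1 → c₀ e ≤ c₀ f) with hP
  have hPsub : ∀ R, P R ⊆ H \ R := fun R => Finset.filter_subset _ _
  have hPH : ∀ R, ∀ e ∈ P R, e ∈ H := fun R e he => (Finset.mem_sdiff.1 (hPsub R he)).1
  have term : ∀ R, R ⊆ H → (∀ e ∈ R, ∃ f ∈ P R, f.2 = e.2 ∧ c₀ e < c₀ f) →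
      (∀ e ∈ P R, ∀ f ∈ P R, e.2 = f.2 → e = f) →
      ∃ K, K ⊆ H ∧ (∀ e ∈ K, ∀ f ∈ K, e ≠ f → ¬(e.1 = f.1 ∨ e.2 = f.2)) ∧
        ∀ e ∈ H, e ∉ K → ∃ f ∈ K,
          (f.1 = e.1 ∧ c₀ f < c₀ e) ∨ (f.2 = e.2 ∧ c₀ e < c₀ f) := by
    intro R hRH hInv hterm
    refine ⟨P R, fun e he => hPH R e he, ?_, ?_⟩
    · intro e he f hf hne hadj
      rcases hadj with h | h
      · have h1 := (Finset.mem_filter.1 he).2 f (hPsub R hf) h.symm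
        have h2 := (Finset.mem_filter.1 hf).2 e (hPsub R he) h
        exact hc e (hPH R e he) f (hPH R f hf) hne (Or.inl h) (le_antisymm h1 h2)
      · exact hne (hterm e he f hf h)
    · intro e heH heK
      by_cases heR : e ∈ R
      · obtain ⟨f, hf, hfy, hflt⟩ := hInv e heR
        exact ⟨f, hf, Or.inr ⟨hfy, hflt⟩⟩
      · have heHR : e ∈ H \ R := Finset.mem_sdiff.2 ⟨heH, heR⟩
        have hSne : ((H \ R).filter (fun f => f.1 = e.1)).Nonempty :=
          ⟨e, Finset.mem_filter.2 ⟨heHR, rfl⟩⟩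
        obtain ⟨f, hfS, hfmin⟩ := Finset.exists_min_image _ c₀ hSne
        have hf1 : f.1 = e.1 := (Finset.mem_filter.1 hfS).2
        have hfHR : f ∈ H \ R := (Finset.mem_filter.1 hfS).1
        have hfP : f ∈ P R := by
          refine Finset.mem_filter.2 ⟨hfHR, fun g hg hg1 => ?_⟩
          exact hfmin g (Finset.mem_filter.2 ⟨hg, by rw [hg1, hf1]⟩)
        have hfe : f ≠ e := fun hcon => heK (hcon ▸ hfP)
        have hle := hfmin e (Finset.mem_filter.2 ⟨heHR, rfl⟩)
        have hne' := hc f (hPH R f hfP) e heH hfe (Or.inl hf1)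
        exact ⟨f, hfP, Or.inl ⟨hf1, lt_of_le_of_ne hle hne'⟩⟩
  have key : ∀ N : ℕ, ∀ R, R ⊆ H → (∀ e ∈ R, ∃ f ∈ P R, f.2 = e.2 ∧ c₀ e < c₀ f) →
      (H \ R).card ≤ N →
      ∃ K, K ⊆ H ∧ (∀ e ∈ K, ∀ f ∈ K, e ≠ f → ¬(e.1 = f.1 ∨ e.2 = f.2)) ∧
        ∀ e ∈ H, e ∉ K → ∃ f ∈ K,
          (f.1 = e.1 ∧ c₀ f < c₀ e) ∨ (f.2 = e.2 ∧ c₀ e < c₀ f) := by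
    intro N
    induction N with
    | zero =>
      intro R hRH hInv hcard
      refine term R hRH hInv ?_
      intro e he
      exfalso
      have h0 : H \ R = ∅ := Finset.card_eq_zero.1 (Nat.le_zero.1 hcard)
      have := hPsub R he
      rw [h0] at this
      exact absurd this (Finset.notMem_empty e)
    | succ N ihN =>
      intro R hRH hInv hcard
      by_cases hterm : ∀ e ∈ P R, ∀ f ∈ P R, e.2 = f.2 → e = f
      · exact term R hRH hInv hterm
      · push_neg at hterm
        obtain ⟨e0, he0, f0, hf0, hy0, hne0⟩ := hterm
        have hcne : c₀ e0 ≠ c₀ f0 :=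
          hc e0 (hPH R e0 he0) f0 (hPH R f0 hf0) hne0 (Or.inr hy0)
        set R' := R ∪ (P R).filter (fun e => ∃ f ∈ P R, f.2 = e.2 ∧ c₀ e < c₀ f) with hR'
        have hR'H : R' ⊆ H := by
          refine Finset.union_subset hRH ?_
          intro e he
          exact hPH R e (Finset.mem_filter.1 he).1
        have hw : ∃ w ∈ P R, ∃ f ∈ P R, f.2 = w.2 ∧ c₀ w < c₀ f := by
          rcases lt_or_gt_of_ne hcne with h | h
          · exact ⟨e0, he0, f0, hf0, hy0.symm, h⟩
          · exact ⟨f0, hf0, e0, he0, hy0, h⟩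
        obtain ⟨w, hwP, hwwit⟩ := hw
        have hwR' : w ∈ R' :=
          Finset.mem_union_right _ (Finset.mem_filter.2 ⟨hwP, hwwit⟩)
        have hwHR : w ∈ H \ R := hPsub R hwP
        have hsub : H \ R' ⊆ H \ R :=
          Finset.sdiff_subset_sdiff (le_refl H) Finset.subset_union_left
        have hss : (H \ R').card < (H \ R).card := by
          refine Finset.card_lt_card ⟨hsub, fun hall => ?_⟩
          have := hall hwHR
          exact (Finset.mem_sdiff.1 this).2 hwR'
        -- max element over a fiber survives
        have hmax : ∀ (y : β), ∀ e ∈ P R, e.2 = y →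
            ∃ fm ∈ P R', fm.2 = y ∧ ∀ g ∈ P R, g.2 = y → c₀ g ≤ c₀ fm := by
          intro y e he hey
          have hTne : ((P R).filter (fun f => f.2 = y)).Nonempty :=
            ⟨e, Finset.mem_filter.2 ⟨he, hey⟩⟩
          obtain ⟨fm, hfmT, hfmmax⟩ := Finset.exists_max_image _ c₀ hTne
          have hfmP : fm ∈ P R := (Finset.mem_filter.1 hfmT).1
          have hfmy : fm.2 = y := (Finset.mem_filter.1 hfmT).2
          have hmaxall : ∀ g ∈ P R, g.2 = y → c₀ g ≤ c₀ fm := fun g hg hgy =>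
            hfmmax g (Finset.mem_filter.2 ⟨hg, hgy⟩)
          have hfmnotnew : fm ∉ (P R).filter (fun e => ∃ f ∈ P R, f.2 = e.2 ∧ c₀ e < c₀ f) := by
            intro hcon
            obtain ⟨f, hfP, hfy, hflt⟩ := (Finset.mem_filter.1 hcon).2
            have := hmaxall f hfP (by rw [hfy, hfmy])
            omega
          have hfmHR' : fm ∈ H \ R' := by
            refine Finset.mem_sdiff.2 ⟨hPH R fm hfmP, fun hcon => ?_⟩
            rcases Finset.mem_union.1 hcon with h | h
            · exact (Finset.mem_sdiff.1 (hPsub R hfmP)).2 h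
            · exact hfmnotnew h
          have hfmP' : fm ∈ P R' := by
            refine Finset.mem_filter.2 ⟨hfmHR', fun g hg hg1 => ?_⟩
            exact (Finset.mem_filter.1 hfmP).2 g (hsub hg) hg1
          exact ⟨fm, hfmP', hfmy, hmaxall⟩
        have hInv' : ∀ e ∈ R', ∃ f ∈ P R', f.2 = e.2 ∧ c₀ e < c₀ f := by
          intro e heR'
          rcases Finset.mem_union.1 heR' with heR | henew
          · obtain ⟨f, hfP, hfy, hflt⟩ := hInv e heR
            obtain ⟨fm, hfmP', hfmy, hfmmax⟩ := hmax e.2 f hfP hfy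
            exact ⟨fm, hfmP', hfmy, lt_of_lt_of_le hflt (hfmmax f hfP hfy)⟩
          · obtain ⟨f, hfP, hfy, hflt⟩ := (Finset.mem_filter.1 henew).2
            obtain ⟨fm, hfmP', hfmy, hfmmax⟩ := hmax e.2 f hfP hfy
            exact ⟨fm, hfmP', hfmy, lt_of_lt_of_le hflt (hfmmax f hfP hfy)⟩
        exact ihN R' hR'H hInv' (by omega)
  refine key (H \ ∅).card ∅ (Finset.empty_subset H) ?_ (le_refl _)
  intro e he
  exact absurd he (Finset.notMem_empty e)

lemma exists_list_coloring (c₀ : α × β → ℕ) : ∀ (M : ℕ) (C : Finset ℕ) (H : Finset (α × β))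
    (L : α × β → Finset ℕ), C.card ≤ M →
    (∀ e ∈ H, ∀ f ∈ H, e ≠ f → (e.1 = f.1 ∨ e.2 = f.2) → c₀ e ≠ c₀ f) →
    (∀ e ∈ H, L e ⊆ C) →
    (∀ e ∈ H, (H.filter (fun f => (f.1 = e.1 ∧ c₀ f < c₀ e) ∨
        (f.2 = e.2 ∧ c₀ e < c₀ f))).card < (L e).card) →
    ∃ ψ : α × β → ℕ, (∀ e ∈ H, ψ e ∈ L e) ∧
      (∀ e ∈ H, ∀ f ∈ H, e ≠ f → (e.1 = f.1 ∨ e.2 = f.2) → ψ e ≠ ψ f) := by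
  classical
  intro M
  induction M with
  | zero =>
    intro C H L hM hc hLC hd
    rcases Finset.eq_empty_or_nonempty H with hE | ⟨e₀, he₀⟩
    · subst hE
      exact ⟨fun _ => 0, fun e he => absurd he (Finset.notMem_empty e),
        fun e he => absurd he (Finset.notMem_empty e)⟩
    · exfalso
      have h1 : 0 < (L e₀).card := lt_of_le_of_lt (Nat.zero_le _) (hd e₀ he₀)
      obtain ⟨x, hx⟩ := Finset.card_pos.1 h1
      have := Finset.card_pos.2 ⟨x, hLC e₀ he₀ hx⟩
      omega
  | succ M ihM =>
    intro C H L hM hc hLC hd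
    rcases Finset.eq_empty_or_nonempty H with hE | ⟨e₀, he₀⟩
    · subst hE
      exact ⟨fun _ => 0, fun e he => absurd he (Finset.notMem_empty e),
        fun e he => absurd he (Finset.notMem_empty e)⟩
    · have h1 : 0 < (L e₀).card := lt_of_le_of_lt (Nat.zero_le _) (hd e₀ he₀)
      obtain ⟨c, hcL⟩ := Finset.card_pos.1 h1
      have hcC : c ∈ C := hLC e₀ he₀ hcL
      set Hc := H.filter (fun e => c ∈ L e) with hHc
      have hHcH : Hc ⊆ H := Finset.filter_subset _ _
      obtain ⟨K, hKsub, hKmatch, hKdom⟩ := exists_kernel Hc c₀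
        (fun e he f hf => hc e (hHcH he) f (hHcH hf))
      have hKH : K ⊆ H := hKsub.trans hHcH
      set H' := H \ K with hH'
      have hH'H : H' ⊆ H := Finset.sdiff_subset
      set L' := fun e => (L e).erase c with hL'
      have hM' : (C.erase c).card ≤ M := by
        rw [Finset.card_erase_of_mem hcC]
        have := Finset.card_pos.2 ⟨c, hcC⟩
        omega
      have hstep : ∀ e ∈ H', (H'.filter (fun f => (f.1 = e.1 ∧ c₀ f < c₀ e) ∨
          (f.2 = e.2 ∧ c₀ e < c₀ f))).card < (L' e).card := by
        intro e he
        have heH : e ∈ H := hH'H he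
        have heK : e ∉ K := (Finset.mem_sdiff.1 he).2
        by_cases hcLe : c ∈ L e
        · have heHc : e ∈ Hc := Finset.mem_filter.2 ⟨heH, hcLe⟩
          obtain ⟨f, hfK, hfdom⟩ := hKdom e heHc heK
          have hfmem : f ∈ H.filter (fun f => (f.1 = e.1 ∧ c₀ f < c₀ e) ∨
              (f.2 = e.2 ∧ c₀ e < c₀ f)) := Finset.mem_filter.2 ⟨hKH hfK, hfdom⟩
          have hsub : H'.filter (fun f => (f.1 = e.1 ∧ c₀ f < c₀ e) ∨
              (f.2 = e.2 ∧ c₀ e < c₀ f)) ⊆ (H.filter (fun f => (f.1 = e.1 ∧ c₀ f < c₀ e) ∨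
              (f.2 = e.2 ∧ c₀ e < c₀ f))).erase f := by
            intro g hg
            have hg1 := Finset.mem_filter.1 hg
            refine Finset.mem_erase.2 ⟨fun hcon => ?_, Finset.mem_filter.2 ⟨hH'H hg1.1, hg1.2⟩⟩
            exact (Finset.mem_sdiff.1 hg1.1).2 (hcon ▸ hfK)
          have h2 := Finset.card_le_card hsub
          rw [Finset.card_erase_of_mem hfmem] at h2
          have h3 := hd e heH
          have h4 : (L' e).card = (L e).card - 1 := Finset.card_erase_of_mem hcLe
          have h5 := Finset.card_pos.2 ⟨c, hcLe⟩
          have h6 := Finset.card_pos.2 ⟨f, hfmem⟩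
          omega
        · have h4 : L' e = L e := Finset.erase_eq_of_notMem hcLe
          have h2 : (H'.filter (fun f => (f.1 = e.1 ∧ c₀ f < c₀ e) ∨
              (f.2 = e.2 ∧ c₀ e < c₀ f))).card ≤ (H.filter (fun f => (f.1 = e.1 ∧ c₀ f < c₀ e) ∨
              (f.2 = e.2 ∧ c₀ e < c₀ f))).card :=
            Finset.card_le_card (Finset.filter_subset_filter _ hH'H)
          rw [h4]
          exact lt_of_le_of_lt h2 (hd e heH)
      obtain ⟨ψ', hψ'mem, hψ'prop⟩ := ihM (C.erase c) H' L' hM'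
        (fun e he f hf => hc e (hH'H he) f (hH'H hf))
        (fun e he => Finset.erase_subset_erase c (hLC e (hH'H he)))
        hstep
      refine ⟨fun e => if e ∈ K then c else ψ' e, ?_, ?_⟩
      · intro e he
        by_cases heK : e ∈ K
        · simp only [heK, if_true]
          exact (Finset.mem_filter.1 (hKsub heK)).2
        · simp only [heK, if_false]
          exact Finset.erase_subset _ _ (hψ'mem e (Finset.mem_sdiff.2 ⟨he, heK⟩))
      · intro e he f hf hne hadj
        by_cases h1 : e ∈ K <;> by_cases h2 : f ∈ K
        · exact absurd hadj (hKmatch e h1 f h2 hne)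
        · simp only [h1, h2, if_true, if_false]
          have := hψ'mem f (Finset.mem_sdiff.2 ⟨hf, h2⟩)
          exact fun hcon => (Finset.ne_of_mem_erase this) hcon.symm
        · simp only [h1, h2, if_true, if_false]
          have := hψ'mem e (Finset.mem_sdiff.2 ⟨he, h1⟩)
          exact Finset.ne_of_mem_erase this
        · simp only [h1, h2, if_false]
          exact hψ'prop e (Finset.mem_sdiff.2 ⟨he, h1⟩) f (Finset.mem_sdiff.2 ⟨hf, h2⟩) hne hadj

theorem stmt15' {α β : Type*} [Fintype α] [Fintype β] [DecidableEq α] [DecidableEq β]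
    (E : Finset (α × β)) (m n l k : ℕ)
    (hm : 0 < m) (hn : 0 < n) (hl : 0 < l) (hk : 0 < k)
    (hcardX : Fintype.card α = m) (hcardY : Fintype.card β = n)
    (hdX : ∀ x : α, degX E x = l) (hdY : ∀ y : β, degY E y = k)
    (hnm : n ≤ m) (hml : m * l = n * k) :
    ∀ t : ℕ, k ≤ t → t ≤ n * k →
      ∃ φ : α × β → ℕ, ((∀ e ∈ E, φ e ∈ Finset.Icc 1 t) ∧
        (∀ c ∈ Finset.Icc 1 t, ∃ e ∈ E, φ e = c) ∧
        (∀ e ∈ E, ∀ e' ∈ E, e ≠ e' → (e.1 = e'.1 ∨ e.2 = e'.2) → φ e ≠ φ e')) ∧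
        (∀ y : β, ((E.filter fun e => e.2 = y).image φ).Nonempty →
          ((E.filter fun e => e.2 = y).image φ).Nonempty ∧
          ∀ a ∈ (E.filter fun e => e.2 = y).image φ, ∀ b ∈ (E.filter fun e => e.2 = y).image φ,
            ∀ c, a ≤ c → c ≤ b → c ∈ (E.filter fun e => e.2 = y).image φ) := by
  classical
  intro t ht1 ht2
  have hlk : l ≤ k := by
    have h1 : m * l ≤ m * k := by
      rw [hml]
      exact Nat.mul_le_mul_right k hnm
    exact Nat.le_of_mul_le_mul_left h1 hm
  have hmn' : Fintype.card β ≤ Fintype.card α := by rw [hcardX, hcardY]; exact hnm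
  obtain ⟨c₀, hc₀mem, hc₀prop⟩ := konig_coloring k E hdY (fun x => (hdX x) ▸ hlk) hmn'
  -- degree bounds on the orientation
  have hdominX : ∀ e ∈ E, (E.filter (fun f => f.1 = e.1 ∧ c₀ f < c₀ e)).card ≤ c₀ e - 1 := by
    intro e he
    set S := E.filter (fun f => f.1 = e.1 ∧ c₀ f < c₀ e) with hS
    have hinj : Set.InjOn c₀ S := by
      intro f hf g hg hfg
      by_contra hne
      have hf' := Finset.mem_filter.1 hf
      have hg' := Finset.mem_filter.1 hg
      exact hc₀prop f hf'.1 g hg'.1 hne (Or.inl (hf'.2.1.trans hg'.2.1.symm)) hfg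
    have himg : S.image c₀ ⊆ Finset.Icc 1 (c₀ e - 1) := by
      intro z hz
      obtain ⟨f, hf, hfz⟩ := Finset.mem_image.1 hz
      have hf' := Finset.mem_filter.1 hf
      have := hc₀mem f hf'.1
      simp only [Finset.mem_Icc] at *
      omega
    have h1 : S.card = (S.image c₀).card := (Finset.card_image_of_injOn hinj).symm
    have h2 := Finset.card_le_card himg
    rw [Nat.card_Icc] at h2
    omega
  have hdominY : ∀ e ∈ E, (E.filter (fun f => f.2 = e.2 ∧ c₀ e < c₀ f)).card ≤ k - c₀ e := by
    intro e he
    set S := E.filter (fun f => f.2 = e.2 ∧ c₀ e < c₀ f) with hS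
    have hinj : Set.InjOn c₀ S := by
      intro f hf g hg hfg
      by_contra hne
      have hf' := Finset.mem_filter.1 hf
      have hg' := Finset.mem_filter.1 hg
      exact hc₀prop f hf'.1 g hg'.1 hne (Or.inr (hf'.2.1.trans hg'.2.1.symm)) hfg
    have himg : S.image c₀ ⊆ Finset.Icc (c₀ e + 1) k := by
      intro z hz
      obtain ⟨f, hf, hfz⟩ := Finset.mem_image.1 hz
      have hf' := Finset.mem_filter.1 hf
      have := hc₀mem f hf'.1
      simp only [Finset.mem_Icc] at *
      omega
    have h1 : S.card = (S.image c₀).card := (Finset.card_image_of_injOn hinj).symm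
    have h2 := Finset.card_le_card himg
    rw [Nat.card_Icc] at h2
    omega
  -- the shifts
  set eqv : β ≃ Fin n := Fintype.equivFinOfCardEq hcardY with heqv
  set a : β → ℕ := fun y => min ((eqv y : ℕ) * k) (t - k) with ha
  set L : α × β → Finset ℕ := fun e => Finset.Icc (a e.2 + 1) (a e.2 + k) with hL
  have hLcard : ∀ e, (L e).card = k := by
    intro e
    simp only [hL, Nat.card_Icc]
    omega
  have hdplus : ∀ e ∈ E, (E.filter (fun f => (f.1 = e.1 ∧ c₀ f < c₀ e) ∨
      (f.2 = e.2 ∧ c₀ e < c₀ f))).card < (L e).card := by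
    intro e he
    have hsub : E.filter (fun f => (f.1 = e.1 ∧ c₀ f < c₀ e) ∨ (f.2 = e.2 ∧ c₀ e < c₀ f)) ⊆
        E.filter (fun f => f.1 = e.1 ∧ c₀ f < c₀ e) ∪
        E.filter (fun f => f.2 = e.2 ∧ c₀ e < c₀ f) := by
      intro g hg
      have hg' := Finset.mem_filter.1 hg
      rcases hg'.2 with h | h
      · exact Finset.mem_union_left _ (Finset.mem_filter.2 ⟨hg'.1, h⟩)
      · exact Finset.mem_union_right _ (Finset.mem_filter.2 ⟨hg'.1, h⟩)
    have h1 := Finset.card_le_card hsub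
    have h2 := Finset.card_union_le (E.filter (fun f => f.1 = e.1 ∧ c₀ f < c₀ e))
      (E.filter (fun f => f.2 = e.2 ∧ c₀ e < c₀ f))
    have h3 := hdominX e he
    have h4 := hdominY e he
    have h5 := hc₀mem e he
    simp only [Finset.mem_Icc] at h5
    rw [hLcard]
    omega
  have hLC : ∀ e ∈ E, L e ⊆ Finset.Icc 1 t := by
    intro e _ z hz
    simp only [hL, Finset.mem_Icc] at hz ⊢
    have : a e.2 ≤ t - k := min_le_right _ _
    omega
  obtain ⟨ψ, hψmem, hψprop⟩ := exists_list_coloring c₀ t (Finset.Icc 1 t) E L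
    (by rw [Nat.card_Icc]; omega) hc₀prop hLC hdplus
  -- spectra are exactly the intervals
  have hspec : ∀ y : β, (E.filter (fun e => e.2 = y)).image ψ =
      Finset.Icc (a y + 1) (a y + k) := by
    intro y
    have hsub : (E.filter (fun e => e.2 = y)).image ψ ⊆ Finset.Icc (a y + 1) (a y + k) := by
      intro z hz
      obtain ⟨e, he, hez⟩ := Finset.mem_image.1 hz
      have he' := Finset.mem_filter.1 he
      have := hψmem e he'.1
      rw [hez] at this
      rw [← he'.2]
      exact this
    have hinj : Set.InjOn ψ (E.filter (fun e => e.2 = y)) := by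
      intro f hf g hg hfg
      by_contra hne
      have hf' := Finset.mem_filter.1 hf
      have hg' := Finset.mem_filter.1 hg
      exact hψprop f hf'.1 g hg'.1 hne (Or.inr (hf'.2.trans hg'.2.symm)) hfg
    have hcard1 : ((E.filter (fun e => e.2 = y)).image ψ).card = k := by
      rw [Finset.card_image_of_injOn hinj]
      exact hdY y
    refine Finset.eq_of_subset_of_card_le hsub ?_
    rw [hcard1, Nat.card_Icc]
    omega
  refine ⟨ψ, ⟨fun e he => hLC e he (hψmem e he), ?_, hψprop⟩, ?_⟩
  · -- surjectivity
    intro c hc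
    simp only [Finset.mem_Icc] at hc
    have hi : (c - 1) / k < n := by
      rw [Nat.div_lt_iff_lt_mul hk]
      have : 0 < n * k := Nat.mul_pos hn hk
      omega
    set y : β := eqv.symm ⟨(c - 1) / k, hi⟩ with hy
    have hay : a y = min ((c - 1) / k * k) (t - k) := by
      simp only [ha, hy, Equiv.apply_symm_apply]
    have hdiv1 : (c - 1) / k * k ≤ c - 1 := Nat.div_mul_le_self _ _
    have hdiv2 : (c - 1) / k * k + (c - 1) % k = c - 1 := Nat.div_add_mod' _ _
    have hmod : (c - 1) % k < k := Nat.mod_lt _ hk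
    have hcy : c ∈ Finset.Icc (a y + 1) (a y + k) := by
      simp only [Finset.mem_Icc]
      rcases le_total ((c - 1) / k * k) (t - k) with h | h
      · rw [hay, min_eq_left h]
        omega
      · rw [hay, min_eq_right h]
        omega
    rw [← hspec y] at hcy
    obtain ⟨e, he, hez⟩ := Finset.mem_image.1 hcy
    exact ⟨e, (Finset.mem_filter.1 he).1, hez⟩
  · -- interval on Y
    intro y _
    rw [hspec y]
    refine ⟨?_, ?_⟩
    · refine ⟨a y + 1, ?_⟩
      simp only [Finset.mem_Icc]
      omega
    · intro u hu v hv c hc1 hc2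
      simp only [Finset.mem_Icc] at *
      omega

end Stmt15Aux

/-- For an `(l,k)`-biregular bipartite graph (`|X| = m`,
`|Y| = n`, `m ≥ n`, `ml = nk`) and every `t` with `k ≤ t ≤ nk`, there is a
proper edge `t`-coloring interval on `Y`. -/
theorem stmt15 {α β : Type*} [Fintype α] [Fintype β] [DecidableEq α] [DecidableEq β]
    (E : Finset (α × β)) (m n l k : ℕ)
    (hm : 0 < m) (hn : 0 < n) (hl : 0 < l) (hk : 0 < k)
    (hcardX : Fintype.card α = m) (hcardY : Fintype.card β = n)
    (hdX : ∀ x : α, degX E x = l) (hdY : ∀ y : β, degY E y = k)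
    (hnm : n ≤ m) (hml : m * l = n * k) :
    ∀ t : ℕ, k ≤ t → t ≤ n * k →
      ∃ φ : α × β → ℕ, IsProperEdgeColoring E t φ ∧ IntervalOnY E φ := by
  intro t ht1 ht2
  obtain ⟨φ, h1, h2⟩ := stmt15' E m n l k hm hn hl hk hcardX hcardY hdX hdY hnm hml t ht1 ht2
  exact ⟨φ, h1, h2⟩
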